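/- For every density matrix ρ on the n-partite Hilbert space H, the fidelity of separability equals the optimal average fidelity of separability over pure-state decompositions: F_sep(ρ) = sup over all finite decompositions ρ = ∑_i p_i |ψ_i⟩⟨ψ_i| (p_i ≥ 0, ∑_i p_i = 1, ψ_i unit vectors) of ∑_i p_i · F_sep(|ψ_i⟩⟨ψ_i|). Equivalently, F_sep(ρ) = sup over such decompositions of ∑_i p_i · Λ_max(ψ_i)². -/

import Mathlib

open scoped BigOperators ComplexOrder

noncomputable section

/-- Inner product `⟨u,v⟩ = ∑ x, conj (u x) * v x` on functions `ι → ℂ`. -/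
def inn {ι : Type*} [Fintype ι] (u v : ι → ℂ) : ℂ := ∑ x, star (u x) * v x

/-- Unit vector. -/
def IsUnitVec {ι : Type*} [Fintype ι] (v : ι → ℂ) : Prop := inn v v = 1

/-- Rank-one projector `|v⟩⟨v|`. -/
def proj {ι : Type*} [Fintype ι] (v : ι → ℂ) : Matrix ι ι ℂ :=
  fun x y => v x * star (v y)

/-- Positive semidefinite square root (zero on non-PSD matrices). -/
def psqrt {ι : Type*} [Fintype ι] [DecidableEq ι] (A : Matrix ι ι ℂ) : Matrix ι ι ℂ :=
  open scoped Classical in if h : A.PosSemidef then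
    (h.1.eigenvectorUnitary : Matrix ι ι ℂ) *
      Matrix.diagonal ((↑) ∘ Real.sqrt ∘ h.1.eigenvalues) *
      (star h.1.eigenvectorUnitary : Matrix ι ι ℂ) else 0

/-- Fidelity `F(ρ,σ) = (Tr √(√ρ σ √ρ))²`. -/
def fid {ι : Type*} [Fintype ι] [DecidableEq ι] (ρ σ : Matrix ι ι ℂ) : ℝ :=
  ((psqrt (psqrt ρ * σ * psqrt ρ)).trace.re) ^ 2

/-- Product vector on the `n`-partite Hilbert space. -/
def IsProdVec {n : ℕ} {d : Fin n → ℕ} (v : (∀ j, Fin (d j)) → ℂ) : Prop :=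
  ∃ f : ∀ j, Fin (d j) → ℂ, ∀ x, v x = ∏ j, f j (x j)

/-- Separable state: finite convex combination of projectors onto product unit vectors. -/
def IsSepState {n : ℕ} {d : Fin n → ℕ}
    (σ : Matrix (∀ j, Fin (d j)) (∀ j, Fin (d j)) ℂ) : Prop :=
  ∃ (k : ℕ) (p : Fin k → ℝ) (φ : Fin k → (∀ j, Fin (d j)) → ℂ),
    (∀ i, 0 ≤ p i) ∧ ∑ i, p i = 1 ∧
    (∀ i, IsProdVec (φ i) ∧ IsUnitVec (φ i)) ∧
    σ = ∑ i, (p i : ℂ) • proj (φ i)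

/-- Fidelity of separability. -/
def Fsep {n : ℕ} {d : Fin n → ℕ}
    (ρ : Matrix (∀ j, Fin (d j)) (∀ j, Fin (d j)) ℂ) : ℝ :=
  sSup {x | ∃ σ, IsSepState σ ∧ x = fid ρ σ}

/-- Maximal overlap with product unit vectors. -/
def Lmax {n : ℕ} {d : Fin n → ℕ} (ψ : (∀ j, Fin (d j)) → ℂ) : ℝ :=
  sSup {x | ∃ φ, IsProdVec φ ∧ IsUnitVec φ ∧ x = ‖inn φ ψ‖}

/-- Density matrix: positive semidefinite with unit trace. -/
def IsDensity {ι : Type*} [Fintype ι] [DecidableEq ι] (ρ : Matrix ι ι ℂ) : Prop :=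
  ρ.PosSemidef ∧ ρ.trace = 1

section Toolkit

variable {ι : Type*} [Fintype ι]

open Complex

lemma inn_conj (u v : ι → ℂ) : inn u v = star (inn v u) := by
  simp [inn, Finset.sum_comm, star_sum, mul_comm]

lemma inn_smul_right (c : ℂ) (u v : ι → ℂ) : inn u (c • v) = c * inn u v := by
  simp only [inn, Pi.smul_apply, smul_eq_mul, Finset.mul_sum]
  exact Finset.sum_congr rfl fun x _ => by ring

lemma inn_smul_left (c : ℂ) (u v : ι → ℂ) : inn (c • u) v = star c * inn u v := by
  simp only [inn, Pi.smul_apply, smul_eq_mul, star_mul', Finset.mul_sum]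
  exact Finset.sum_congr rfl fun x _ => by ring

lemma inn_sum_right {κ : Type*} (s : Finset κ) (u : ι → ℂ) (v : κ → ι → ℂ) :
    inn u (∑ k ∈ s, v k) = ∑ k ∈ s, inn u (v k) := by
  simp [inn, Finset.mul_sum]
  rw [Finset.sum_comm]

lemma inn_self_eq_sum_sq (v : ι → ℂ) : inn v v = ((∑ x, ‖v x‖ ^ 2 : ℝ) : ℂ) := by
  push_cast
  rw [inn]
  exact Finset.sum_congr rfl fun x _ => by
    rw [← Complex.ofReal_pow, Complex.sq_norm, Complex.normSq_eq_conj_mul_self]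
    rfl

lemma inn_self_nonneg_re (v : ι → ℂ) : 0 ≤ (inn v v).re := by
  rw [inn_self_eq_sum_sq, Complex.ofReal_re]
  positivity

lemma inn_self_im (v : ι → ℂ) : (inn v v).im = 0 := by rw [inn_self_eq_sum_sq, Complex.ofReal_im]

lemma inn_self_coe (v : ι → ℂ) : inn v v = ((inn v v).re : ℂ) := by
  rw [inn_self_eq_sum_sq, Complex.ofReal_re]

lemma eq_zero_of_inn_self_eq_zero {v : ι → ℂ} (h : inn v v = 0) : v = 0 := by
  rw [inn_self_eq_sum_sq] at h
  have h2 : (∑ x, ‖v x‖ ^ 2 : ℝ) = 0 := by exact_mod_cast h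
  funext x
  have hx : ‖v x‖ ^ 2 = 0 := by
    have := Finset.sum_eq_zero_iff_of_nonneg (fun i _ => by positivity) |>.1 h2 x (Finset.mem_univ x)
    exact this
  simpa using pow_eq_zero_iff (n := 2) (by norm_num) |>.1 hx

end Toolkit
section Toolkit2

variable {ι : Type*} [Fintype ι]

open Complex

-- Cauchy–Schwarz for `inn`.
lemma inn_cs (u v : ι → ℂ) :
    ‖inn u v‖ ≤ Real.sqrt ((inn u u).re) * Real.sqrt ((inn v v).re) := by
  let u' : EuclideanSpace ℂ ι := WithLp.toLp 2 u
  let v' : EuclideanSpace ℂ ι := WithLp.toLp 2 v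
  have h1 : inn u v = inner ℂ u' v' := by
    simp [inn, PiLp.inner_apply, RCLike.inner_apply, u', v', mul_comm]
  have h2 : Real.sqrt ((inn u u).re) = ‖u'‖ := by
    rw [EuclideanSpace.norm_eq, inn_self_eq_sum_sq, Complex.ofReal_re]
    try congr 1
    try exact Finset.sum_congr rfl fun x _ => by rw [Complex.norm_eq_abs]
  have h3 : Real.sqrt ((inn v v).re) = ‖v'‖ := by
    rw [EuclideanSpace.norm_eq, inn_self_eq_sum_sq, Complex.ofReal_re]
    try congr 1
    try exact Finset.sum_congr rfl fun x _ => by rw [Complex.norm_eq_abs]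
  rw [h1, h2, h3]
  exact norm_inner_le_norm u' v'

lemma inn_unit_abs_le_one {u v : ι → ℂ} (hu : IsUnitVec u) (hv : IsUnitVec v) :
    ‖inn u v‖ ≤ 1 := by
  have := inn_cs u v
  rw [hu, hv] at this
  simpa using this

lemma inn_mulVec (M : Matrix ι ι ℂ) (u v : ι → ℂ) :
    inn u (M.mulVec v) = inn (M.conjTranspose.mulVec u) v := by
  simp only [inn, Matrix.mulVec, dotProduct, Matrix.conjTranspose_apply,
    Finset.mul_sum, Finset.sum_mul, star_sum, star_mul', star_star]
  rw [Finset.sum_comm]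
  exact Finset.sum_congr rfl fun x _ => Finset.sum_congr rfl fun y _ => by ring

-- outer product
def outer (u w : ι → ℂ) : Matrix ι ι ℂ := fun x y => u x * star (w y)

lemma proj_eq_outer (v : ι → ℂ) : proj v = outer v v := rfl

lemma outer_mulVec (u w x : ι → ℂ) : (outer u w).mulVec x = inn w x • u := by
  funext a
  simp only [Matrix.mulVec, dotProduct, outer, inn, Pi.smul_apply, smul_eq_mul,
    Finset.sum_mul]
  exact Finset.sum_congr rfl fun y _ => by ring

lemma proj_mulVec (v x : ι → ℂ) : (proj v).mulVec x = inn v x • v := by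
  rw [proj_eq_outer, outer_mulVec]

lemma trace_outer (u w : ι → ℂ) : (outer u w).trace = inn w u := by
  simp only [Matrix.trace, Matrix.diag, outer, inn]
  exact Finset.sum_congr rfl fun x _ => by ring

lemma trace_proj (v : ι → ℂ) : (proj v).trace = inn v v := trace_outer v v

variable [DecidableEq ι]

lemma mul_outer (M : Matrix ι ι ℂ) (u w : ι → ℂ) : M * outer u w = outer (M.mulVec u) w := by
  ext x y
  simp only [Matrix.mul_apply, outer, Matrix.mulVec, dotProduct, Finset.sum_mul,
    mul_assoc]

lemma outer_mul (M : Matrix ι ι ℂ) (u w : ι → ℂ) :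
    outer u w * M = outer u (M.conjTranspose.mulVec w) := by
  ext x y
  simp only [Matrix.mul_apply, outer, Matrix.mulVec, dotProduct,
    Matrix.conjTranspose_apply, star_sum, star_mul', star_star, Finset.mul_sum]
  exact Finset.sum_congr rfl fun z _ => by ring

lemma outer_smul_left (c : ℂ) (u w : ι → ℂ) : outer (c • u) w = c • outer u w := by
  ext x y; simp [outer, mul_assoc]

lemma outer_smul_right (c : ℂ) (u w : ι → ℂ) : outer u (c • w) = star c • outer u w := by
  ext x y; simp [outer]; ring

lemma proj_smul (c : ℂ) (v : ι → ℂ) : proj (c • v) = (c * star c) • proj v := by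
  rw [proj_eq_outer, proj_eq_outer, outer_smul_left, outer_smul_right, smul_smul]

lemma outer_mul_outer (u v w z : ι → ℂ) :
    outer u v * outer w z = inn v w • outer u z := by
  rw [mul_outer, outer_mulVec, outer_smul_left]

-- conjugating an outer product
lemma mul_proj_mul (M : Matrix ι ι ℂ) (hM : M.IsHermitian) (v : ι → ℂ) :
    M * proj v * M = proj (M.mulVec v) := by
  rw [proj_eq_outer, proj_eq_outer, mul_outer, outer_mul, hM.eq]

lemma posSemidef_smul_proj {t : ℝ} (ht : 0 ≤ t) (v : ι → ℂ) :
    ((t : ℂ) • proj v).PosSemidef := by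
  refine Matrix.PosSemidef.of_dotProduct_mulVec_nonneg ?_ ?_
  · rw [Matrix.IsHermitian]
    ext x y
    simp [proj, Matrix.conjTranspose_apply, Complex.conj_ofReal, mul_comm]
  · intro x
    have h : dotProduct (star x) (((t : ℂ) • proj v).mulVec x)
        = (t : ℂ) * (inn v x * star (inn v x)) := by
      rw [Matrix.smul_mulVec, proj_mulVec]
      simp only [dotProduct, Pi.smul_apply, Pi.star_apply, smul_eq_mul]
      have key : ∀ a, star (x a) * ((t:ℂ) * (inn v x * v a))
          = (t:ℂ) * (inn v x * (star (x a) * v a)) := fun a => by ring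
      rw [Finset.sum_congr rfl fun a _ => key a, ← Finset.mul_sum, ← Finset.mul_sum]
      have hx : ∑ a, star (x a) * v a = star (inn v x) := by
        simp only [inn, star_sum, star_mul', star_star]
        exact Finset.sum_congr rfl fun a _ => by ring
      rw [hx]
    rw [h, Complex.star_def, Complex.mul_conj, ← Complex.ofReal_mul, Complex.zero_le_real]
    exact mul_nonneg ht (Complex.normSq_nonneg _)

lemma posSemidef_proj (v : ι → ℂ) : (proj v).PosSemidef := by
  have h := posSemidef_smul_proj zero_le_one v
  simpa using h

end Toolkit2
section Spectral

variable {ι : Type*} [Fintype ι] [DecidableEq ι]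

lemma matrix_eq_sum_proj_cols (U : Matrix ι ι ℂ) (f : ι → ℂ) :
    U * Matrix.diagonal f * U.conjTranspose = ∑ k, f k • proj (fun x => U x k) := by
  ext x y
  rw [Matrix.sum_apply]
  rw [Matrix.mul_apply]
  refine Finset.sum_congr rfl fun k _ => ?_
  rw [Matrix.mul_diagonal, Matrix.conjTranspose_apply, Matrix.smul_apply]
  simp only [proj, smul_eq_mul]
  ring

lemma sum_mulVec' {κ : Type*} (s : Finset κ) (A : κ → Matrix ι ι ℂ) (u : ι → ℂ) :
    (∑ k ∈ s, A k).mulVec u = ∑ k ∈ s, (A k).mulVec u := by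
  funext x
  simp only [Matrix.mulVec, dotProduct, Matrix.sum_apply, Finset.sum_apply, Finset.sum_mul]
  rw [Finset.sum_comm]

lemma spectral_psd {A : Matrix ι ι ℂ} (hA : A.PosSemidef) :
    ∃ (v : ι → ι → ℂ) (lam : ι → ℝ),
      (∀ k, 0 ≤ lam k) ∧
      (∀ k l, inn (v k) (v l) = if k = l then 1 else 0) ∧
      ((∑ k, proj (v k)) = (1 : Matrix ι ι ℂ)) ∧
      (A = ∑ k, ((lam k : ℝ) : ℂ) • proj (v k)) ∧
      (psqrt A = ∑ k, ((Real.sqrt (lam k) : ℝ) : ℂ) • proj (v k)) := by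
  classical
  set U : Matrix ι ι ℂ := (hA.1.eigenvectorUnitary : Matrix ι ι ℂ) with hU
  refine ⟨fun k => fun x => U x k, hA.1.eigenvalues, hA.eigenvalues_nonneg, ?_, ?_, ?_, ?_⟩
  · intro k l
    have h := Matrix.mem_unitaryGroup_iff'.mp hA.1.eigenvectorUnitary.2
    have h2 := congrFun (congrFun h k) l
    rw [Matrix.mul_apply, Matrix.one_apply] at h2
    rw [inn, ← h2]
    try rfl
    try simp only [Matrix.star_apply, Matrix.mul_apply]
    try rfl
  · have h := Matrix.mem_unitaryGroup_iff.mp hA.1.eigenvectorUnitary.2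
    ext x y
    rw [Matrix.sum_apply]
    have h2 := congrFun (congrFun h x) y
    rw [Matrix.mul_apply] at h2
    rw [← h2]
    try rfl
    try simp only [Matrix.star_apply, Matrix.mul_apply]
    try rfl
  · nth_rewrite 1 [hA.1.spectral_theorem]
    rw [Unitary.conjStarAlgAut_apply, Matrix.star_eq_conjTranspose, matrix_eq_sum_proj_cols]
    rfl
  · rw [psqrt, dif_pos hA]
    rw [Matrix.star_eq_conjTranspose, matrix_eq_sum_proj_cols]
    rfl

lemma trace_sum_smul_proj (v : ι → ι → ℂ) (c : ι → ℝ)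
    (hv : ∀ k, inn (v k) (v k) = 1) :
    (∑ k, ((c k : ℝ) : ℂ) • proj (v k)).trace = ((∑ k, c k : ℝ) : ℂ) := by
  rw [Matrix.trace_sum]
  push_cast
  exact Finset.sum_congr rfl fun k _ => by
    rw [Matrix.trace_smul, trace_proj, hv k, smul_eq_mul, mul_one]

lemma sum_smul_proj_mul (v : ι → ι → ℂ)
    (horth : ∀ k l, inn (v k) (v l) = if k = l then 1 else 0) (a b : ι → ℂ) :
    (∑ k, a k • proj (v k)) * (∑ k, b k • proj (v k)) = ∑ k, (a k * b k) • proj (v k) := by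
  have hterm : ∀ k l, (a k • proj (v k)) * (b l • proj (v l))
      = (if l = k then (a k * b l) • proj (v k) else 0) := by
    intro k l
    rw [smul_mul_assoc, mul_smul_comm, proj_eq_outer (v k), proj_eq_outer (v l),
      outer_mul_outer, horth]
    by_cases h : k = l
    · subst h
      simp [proj_eq_outer, smul_smul]
    · simp [h, Ne.symm h]
  rw [Finset.sum_mul_sum]
  simp only [hterm]
  refine Finset.sum_congr rfl fun k _ => ?_
  rw [Finset.sum_ite_eq', if_pos (Finset.mem_univ k)]

lemma inn_eig (v : ι → ι → ℂ)
    (horth : ∀ k l, inn (v k) (v l) = if k = l then 1 else 0) (c : ι → ℂ) (k : ι) :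
    inn (v k) ((∑ l, c l • proj (v l)).mulVec (v k)) = c k := by
  rw [sum_mulVec']
  rw [inn_sum_right]
  have hterm : ∀ l, inn (v k) ((c l • proj (v l)).mulVec (v k))
      = (if l = k then c k else 0) := by
    intro l
    rw [Matrix.smul_mulVec, proj_mulVec]
    rw [inn_smul_right, inn_smul_right, horth, horth]
    by_cases h : l = k
    · subst h; simp
    · simp [h, Ne.symm h]
  simp only [hterm]
  rw [Finset.sum_ite_eq', if_pos (Finset.mem_univ k)]

end Spectral
section Pure

variable {ι : Type*} [Fintype ι] [DecidableEq ι]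

lemma psqrt_eq {A B : Matrix ι ι ℂ} (hA : A.PosSemidef) (hB : B.PosSemidef)
    (h : A * A = B) : psqrt B = A := by
  open scoped MatrixOrder in
  have hc : psqrt B = CFC.sqrt B := by
    rw [CFC.sqrt_eq_cfc, cfc_nnreal_eq_real _ B, hB.1.cfc_eq, Matrix.IsHermitian.cfc,
      Unitary.conjStarAlgAut_apply, psqrt, dif_pos hB]
    congr 3
    funext x
    have hx : ∀ y : ℝ, √y = √(max y 0) := fun y => by
      rcases le_total y 0 with hy | hy
      · rw [max_eq_right hy, Real.sqrt_eq_zero'.2 hy, Real.sqrt_zero]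
      · rw [max_eq_left hy]
    simp [Real.coe_sqrt, ← hx]
  open scoped MatrixOrder in
  rw [hc]
  exact CFC.sqrt_unique h hA.nonneg

lemma proj_mul_self {ψ : ι → ℂ} (hψ : IsUnitVec ψ) : proj ψ * proj ψ = proj ψ := by
  rw [proj_eq_outer, outer_mul_outer, hψ, one_smul]

lemma proj_mul_mul_proj (ψ : ι → ℂ) (σ : Matrix ι ι ℂ) :
    proj ψ * σ * proj ψ = inn ψ (σ.mulVec ψ) • proj ψ := by
  rw [proj_eq_outer, outer_mul, mul_outer, outer_mulVec, outer_smul_left, ← inn_mulVec]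

lemma inn_proj_sum (ψ : ι → ℂ) {κ : Type*} [Fintype κ] (q : κ → ℝ) (φ : κ → ι → ℂ) :
    inn ψ ((∑ i, (q i : ℂ) • proj (φ i)).mulVec ψ)
      = ((∑ i, q i * ‖inn (φ i) ψ‖ ^ 2 : ℝ) : ℂ) := by
  rw [sum_mulVec', inn_sum_right]
  push_cast
  refine Finset.sum_congr rfl fun i _ => ?_
  rw [Matrix.smul_mulVec, proj_mulVec, inn_smul_right, inn_smul_right]
  have h : inn ψ (φ i) = star (inn (φ i) ψ) := inn_conj _ _
  rw [h, Complex.star_def, Complex.mul_conj, Complex.normSq_eq_norm_sq]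
  push_cast
  ring

lemma fid_pure (ψ : ι → ℂ) (hψ : IsUnitVec ψ) {m : ℕ} (q : Fin m → ℝ) (hq : ∀ i, 0 ≤ q i)
    (φ : Fin m → ι → ℂ) :
    fid (proj ψ) (∑ i, (q i : ℂ) • proj (φ i))
      = ∑ i, q i * ‖inn (φ i) ψ‖ ^ 2 := by
  set S : ℝ := ∑ i, q i * ‖inn (φ i) ψ‖ ^ 2 with hSdef
  have hS : 0 ≤ S := Finset.sum_nonneg fun i _ => mul_nonneg (hq i) (by positivity)
  have h1 : psqrt (proj ψ) = proj ψ :=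
    psqrt_eq (posSemidef_proj ψ) (posSemidef_proj ψ) (proj_mul_self hψ)
  have h2 : proj ψ * (∑ i, (q i : ℂ) • proj (φ i)) * proj ψ = ((S : ℝ) : ℂ) • proj ψ := by
    rw [proj_mul_mul_proj, inn_proj_sum]
  have h3 : psqrt (((S : ℝ) : ℂ) • proj ψ) = ((Real.sqrt S : ℝ) : ℂ) • proj ψ := by
    refine psqrt_eq (posSemidef_smul_proj (Real.sqrt_nonneg S) ψ)
      (posSemidef_smul_proj hS ψ) ?_
    rw [smul_mul_assoc, mul_smul_comm, proj_mul_self hψ, smul_smul, ← Complex.ofReal_mul,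
      Real.mul_self_sqrt hS]
  rw [fid, h1, h2, h3, Matrix.trace_smul, trace_proj, hψ]
  simp only [smul_eq_mul, mul_one, Complex.ofReal_re]
  rw [Real.sq_sqrt hS]

end Pure

section LmaxFacts

variable {n : ℕ} {d : Fin n → ℕ}

lemma exists_prod_unit (h : Nonempty (∀ j : Fin n, Fin (d j))) :
    ∃ φ : (∀ j, Fin (d j)) → ℂ, IsProdVec φ ∧ IsUnitVec φ := by
  classical
  obtain ⟨x₀⟩ := h
  refine ⟨fun x => if x = x₀ then 1 else 0, ⟨fun j a => if a = x₀ j then 1 else 0, ?_⟩, ?_⟩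
  · intro x
    rw [Finset.prod_boole]
    by_cases h : x = x₀
    · subst h; simp
    · have h2 : ¬ ∀ j ∈ Finset.univ, x j = x₀ j := by
        simp only [Finset.mem_univ, true_implies]
        exact fun hc => h (funext hc)
      simp only [if_neg h, if_neg h2]
  · rw [IsUnitVec, inn]
    rw [Finset.sum_eq_single x₀]
    · simp
    · intro b _ hb; simp [hb]
    · intro hx; exact absurd (Finset.mem_univ x₀) hx

-- The overlap set for Lmax
lemma lmax_set_bddAbove {ψ : (∀ j, Fin (d j)) → ℂ} (hψ : IsUnitVec ψ) :
    BddAbove {x | ∃ φ, IsProdVec φ ∧ IsUnitVec φ ∧ x = ‖inn φ ψ‖} := by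
  refine ⟨1, fun x hx => ?_⟩
  obtain ⟨φ, _, hu, rfl⟩ := hx
  exact inn_unit_abs_le_one hu hψ

lemma lmax_le_one {ψ : (∀ j, Fin (d j)) → ℂ} (hψ : IsUnitVec ψ)
    (hne : ∃ φ : (∀ j, Fin (d j)) → ℂ, IsProdVec φ ∧ IsUnitVec φ) : Lmax ψ ≤ 1 := by
  obtain ⟨φ₀, h1, h2⟩ := hne
  refine csSup_le ⟨_, ⟨φ₀, h1, h2, rfl⟩⟩ ?_
  rintro x ⟨φ, _, hu, rfl⟩
  exact inn_unit_abs_le_one hu hψ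

lemma abs_inn_le_lmax {ψ φ : (∀ j, Fin (d j)) → ℂ} (hψ : IsUnitVec ψ)
    (h1 : IsProdVec φ) (h2 : IsUnitVec φ) : ‖inn φ ψ‖ ≤ Lmax ψ :=
  le_csSup (lmax_set_bddAbove hψ) ⟨φ, h1, h2, rfl⟩

lemma lmax_nonneg {ψ : (∀ j, Fin (d j)) → ℂ} (hψ : IsUnitVec ψ)
    (hne : ∃ φ : (∀ j, Fin (d j)) → ℂ, IsProdVec φ ∧ IsUnitVec φ) : 0 ≤ Lmax ψ := by
  obtain ⟨φ₀, h1, h2⟩ := hne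
  exact le_trans (norm_nonneg _) (abs_inn_le_lmax hψ h1 h2)

lemma exists_near_lmax {ψ : (∀ j, Fin (d j)) → ℂ}
    (hne : ∃ φ : (∀ j, Fin (d j)) → ℂ, IsProdVec φ ∧ IsUnitVec φ)
    {ε : ℝ} (hε : 0 < ε) :
    ∃ φ, IsProdVec φ ∧ IsUnitVec φ ∧ Lmax ψ - ε < ‖inn φ ψ‖ := by
  obtain ⟨φ₀, h1, h2⟩ := hne
  have hne' : {x | ∃ φ, IsProdVec φ ∧ IsUnitVec φ ∧ x = ‖inn φ ψ‖}.Nonempty :=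
    ⟨_, ⟨φ₀, h1, h2, rfl⟩⟩
  have h := exists_lt_of_lt_csSup hne' (show Lmax ψ - ε < Lmax ψ by linarith)
  obtain ⟨x, ⟨φ, hp, hu, rfl⟩, hlt⟩ := h
  exact ⟨φ, hp, hu, hlt⟩

end LmaxFacts
section Helpers

variable {ι : Type*} [Fintype ι] [DecidableEq ι]

lemma inn_eig' (v : ι → ι → ℂ)
    (horth : ∀ k l, inn (v k) (v l) = if k = l then 1 else 0) (c : ι → ℂ) (k l : ι) :
    inn (v k) ((∑ m, c m • proj (v m)).mulVec (v l)) = if k = l then c k else 0 := by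
  rw [sum_mulVec']
  rw [inn_sum_right]
  have hterm : ∀ m, inn (v k) ((c m • proj (v m)).mulVec (v l))
      = (if k = m ∧ m = l then c m else 0) := by
    intro m
    rw [Matrix.smul_mulVec, proj_mulVec, inn_smul_right, inn_smul_right, horth, horth]
    by_cases h1 : m = l <;> by_cases h2 : k = m
    · subst h1; subst h2; simp
    · subst h1; simp [h2]
    · subst h2; simp [h1]
    · simp [h1, h2]
  simp only [hterm]
  by_cases h : k = l
  · subst h
    rw [if_pos rfl, Finset.sum_eq_single k]
    · simp
    · intro b _ hb
      rw [if_neg (fun hc => hb hc.2)]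
    · intro hm; exact absurd (Finset.mem_univ k) hm
  · rw [if_neg h]
    refine Finset.sum_eq_zero fun m _ => ?_
    rw [if_neg (fun hc => h (hc.1.trans hc.2))]

lemma inn_expand {v : ι → ι → ℂ} (hcomp : (∑ k, proj (v k)) = (1 : Matrix ι ι ℂ))
    (a b : ι → ℂ) : inn a b = ∑ k, inn a (v k) * inn (v k) b := by
  conv_lhs => rw [show b = (1 : Matrix ι ι ℂ).mulVec b from by rw [Matrix.one_mulVec], ← hcomp]
  rw [sum_mulVec', inn_sum_right]
  exact Finset.sum_congr rfl fun k _ => by rw [proj_mulVec, inn_smul_right]; ring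

lemma inn_sum_proj {κ : Type*} [Fintype κ] (c : κ → ι → ℂ) (z : ι → ℂ) :
    inn z ((∑ i, proj (c i)).mulVec z)
      = ((∑ i, ‖inn (c i) z‖ ^ 2 : ℝ) : ℂ) := by
  rw [sum_mulVec', inn_sum_right]
  push_cast
  refine Finset.sum_congr rfl fun i _ => ?_
  rw [proj_mulVec, inn_smul_right]
  rw [show inn z (c i) = star (inn (c i) z) from inn_conj _ _]
  rw [Complex.star_def, Complex.mul_conj, Complex.normSq_eq_norm_sq]
  norm_cast

lemma gram_r {J : Type*} [Fintype J] (c : J → ι → ℂ) (a b : ι → ℂ) :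
    inn (fun j => inn (c j) a) (fun j => inn (c j) b)
      = inn a ((∑ j, proj (c j)).mulVec b) := by
  rw [sum_mulVec', inn_sum_right, inn]
  refine Finset.sum_congr rfl fun j _ => ?_
  rw [proj_mulVec, inn_smul_right]
  rw [show inn a (c j) = star (inn (c j) a) from inn_conj _ _]
  ring

lemma posSemidef_sum {κ : Type*} (s : Finset κ) (A : κ → Matrix ι ι ℂ)
    (h : ∀ k ∈ s, (A k).PosSemidef) : (∑ k ∈ s, A k).PosSemidef := by
  classical
  induction s using Finset.induction with
  | empty => simpa using Matrix.PosSemidef.zero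
  | @insert a s hnotmem ih =>
    rw [Finset.sum_insert hnotmem]
    exact ((h _ (Finset.mem_insert_self _ _)).add
      (ih fun k hk => h k (Finset.mem_insert_of_mem hk)))

lemma isHermitian_real_smul_proj (c : ℝ) (v : ι → ℂ) :
    (((c : ℝ) : ℂ) • proj v).IsHermitian := by
  rw [Matrix.IsHermitian]
  ext x y
  simp only [Matrix.conjTranspose_apply, Matrix.smul_apply, proj, smul_eq_mul, star_mul',
    star_star, Complex.star_def, Complex.conj_ofReal, Complex.conj_conj]
  ring

lemma isHermitian_sum_smul_proj {κ : Type*} [Fintype κ] (c : κ → ℝ) (v : κ → ι → ℂ) :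
    (∑ k, ((c k : ℝ) : ℂ) • proj (v k)).IsHermitian := by
  rw [Matrix.IsHermitian, Matrix.conjTranspose_sum]
  exact Finset.sum_congr rfl fun k _ => (isHermitian_real_smul_proj (c k) (v k)).eq

-- inner product on EuclideanSpace agrees with inn
lemma inn_eq_inner {J : Type*} [Fintype J] (u v : J → ℂ) :
    inn u v = @inner ℂ (EuclideanSpace ℂ J) _ (WithLp.toLp 2 u) (WithLp.toLp 2 v) := by
  simp [inn, PiLp.inner_apply, RCLike.inner_apply, mul_comm]

/-- Extension of a partial orthonormal family to a full orthonormal family. -/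
lemma extend_orthonormal {ι' J : Type*} [Fintype ι'] [Fintype J] [DecidableEq ι']
    (hcard : Fintype.card ι' ≤ Fintype.card J)
    (T : Set ι') [DecidablePred (· ∈ T)] (r : ι' → J → ℂ)
    (horth : ∀ k ∈ T, ∀ l ∈ T, inn (r k) (r l) = if k = l then 1 else 0) :
    ∃ s : ι' → J → ℂ, (∀ k ∈ T, s k = r k)
      ∧ ∀ k l, inn (s k) (s l) = if k = l then 1 else 0 := by
  classical
  set E := EuclideanSpace ℂ J
  have hrank : Module.finrank ℂ E = Fintype.card J := finrank_euclideanSpace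
  set K := ι' ⊕ Fin (Fintype.card J - Fintype.card ι') with hK
  have hcardK : Module.finrank ℂ E = Fintype.card K := by
    rw [hrank]
    simp only [K, Fintype.card_sum, Fintype.card_fin]
    omega
  set v : K → E := Sum.elim (fun k => WithLp.toLp 2 (r k)) (fun _ => 0) with hv
  set Tset : Set K := Sum.inl '' T with hT
  have hvon : Orthonormal ℂ (Tset.restrict v) := by
    rw [orthonormal_iff_ite]
    rintro ⟨i, hi⟩ ⟨j, hj⟩
    obtain ⟨k, hk, rfl⟩ := hi
    obtain ⟨l, hl, rfl⟩ := hj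
    have := horth k hk l hl
    rw [inn_eq_inner] at this
    simp only [Set.restrict_apply, hv, Sum.elim_inl]
    show inner ℂ (WithLp.toLp 2 (r k)) (WithLp.toLp 2 (r l)) = _
    rw [this]
    by_cases h : k = l
    · subst h; simp
    · rw [if_neg h, if_neg (fun hc => h (Sum.inl.inj (Subtype.ext_iff.mp hc)))]
  obtain ⟨b, hb⟩ := hvon.exists_orthonormalBasis_extension_of_card_eq hcardK
  refine ⟨fun k => (b (Sum.inl k) : J → ℂ), ?_, ?_⟩
  · intro k hk
    have h2 := hb (Sum.inl k) ⟨k, hk, rfl⟩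
    show b (Sum.inl k) = r k
    rw [h2]
    rfl
  · intro k l
    have h2 := (orthonormal_iff_ite.mp b.orthonormal) (Sum.inl k) (Sum.inl l)
    rw [inn_eq_inner, h2]
    by_cases h : k = l
    · subst h; simp
    · rw [if_neg (fun hc => h (Sum.inl.inj hc)), if_neg h]

end Helpers
section PartC

variable {n : ℕ} {d : Fin n → ℕ}

lemma sep_of_prod_unit {φ : (∀ j, Fin (d j)) → ℂ} (h1 : IsProdVec φ) (h2 : IsUnitVec φ) :
    IsSepState (proj φ) :=
  ⟨1, fun _ => 1, fun _ => φ, fun _ => zero_le_one, by simp, fun _ => ⟨h1, h2⟩, by simp⟩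

lemma fsep_pure (hne : ∃ φ : (∀ j, Fin (d j)) → ℂ, IsProdVec φ ∧ IsUnitVec φ)
    {ψ : (∀ j, Fin (d j)) → ℂ} (hψ : IsUnitVec ψ) : Fsep (proj ψ) = (Lmax ψ) ^ 2 := by
  obtain ⟨φ₀, hp₀, hu₀⟩ := hne
  have hFne : {x | ∃ σ, IsSepState σ ∧ x = fid (proj ψ) σ}.Nonempty :=
    ⟨_, proj φ₀, sep_of_prod_unit hp₀ hu₀, rfl⟩
  have hub : ∀ x ∈ {x | ∃ σ, IsSepState σ ∧ x = fid (proj ψ) σ}, x ≤ (Lmax ψ) ^ 2 := by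
    rintro x ⟨σ, hσ, rfl⟩
    obtain ⟨m, q, φ, h0, h1, h2, rfl⟩ := hσ
    rw [fid_pure ψ hψ q h0 φ]
    calc ∑ i, q i * ‖inn (φ i) ψ‖ ^ 2
        ≤ ∑ i, q i * (Lmax ψ) ^ 2 := by
          refine Finset.sum_le_sum fun i _ => mul_le_mul_of_nonneg_left ?_ (h0 i)
          exact pow_le_pow_left₀ (norm_nonneg _)
            (abs_inn_le_lmax hψ (h2 i).1 (h2 i).2) 2
      _ = (Lmax ψ) ^ 2 := by rw [← Finset.sum_mul, h1, one_mul]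
  have hbdd : BddAbove {x | ∃ σ, IsSepState σ ∧ x = fid (proj ψ) σ} := ⟨(Lmax ψ) ^ 2, hub⟩
  refine le_antisymm (csSup_le hFne hub) ?_
  have hL1 : Lmax ψ ≤ 1 := lmax_le_one hψ ⟨φ₀, hp₀, hu₀⟩
  refine le_of_forall_pos_le_add fun ε hε => ?_
  obtain ⟨φ, hp, hu, hlt⟩ := exists_near_lmax (ψ := ψ) ⟨φ₀, hp₀, hu₀⟩ (half_pos hε)
  set a := ‖inn φ ψ‖ with ha
  have ha1 : a ≤ Lmax ψ := abs_inn_le_lmax hψ hp hu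
  have ha0 : 0 ≤ a := norm_nonneg _
  have hmem : a ^ 2 ∈ {x | ∃ σ, IsSepState σ ∧ x = fid (proj ψ) σ} := by
    refine ⟨proj φ, sep_of_prod_unit hp hu, ?_⟩
    have hrw : proj φ = ∑ _i : Fin 1, (((1:ℝ) : ℝ) : ℂ) • proj ((fun _ => φ) _i) := by simp
    rw [hrw, fid_pure ψ hψ (fun _ => (1:ℝ)) (fun _ => zero_le_one) (fun _ => φ)]
    simp [ha]
  have hle : a ^ 2 ≤ Fsep (proj ψ) := le_csSup hbdd hmem
  nlinarith [hlt, hL1, ha1, ha0]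

lemma decomp_sets_eq (hne : ∃ φ : (∀ j, Fin (d j)) → ℂ, IsProdVec φ ∧ IsUnitVec φ)
    (ρ : Matrix (∀ j, Fin (d j)) (∀ j, Fin (d j)) ℂ) :
    {x | ∃ (k : ℕ) (p : Fin k → ℝ) (ψs : Fin k → (∀ j, Fin (d j)) → ℂ),
        (∀ i, 0 ≤ p i) ∧ ∑ i, p i = 1 ∧ (∀ i, IsUnitVec (ψs i)) ∧
        ρ = ∑ i, (p i : ℂ) • proj (ψs i) ∧
        x = ∑ i, p i * Fsep (proj (ψs i))}
      = {x | ∃ (k : ℕ) (p : Fin k → ℝ) (ψs : Fin k → (∀ j, Fin (d j)) → ℂ),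
        (∀ i, 0 ≤ p i) ∧ ∑ i, p i = 1 ∧ (∀ i, IsUnitVec (ψs i)) ∧
        ρ = ∑ i, (p i : ℂ) • proj (ψs i) ∧
        x = ∑ i, p i * (Lmax (ψs i)) ^ 2} := by
  ext x
  constructor
  · rintro ⟨k, p, ψs, h0, h1, hu, hdec, rfl⟩
    exact ⟨k, p, ψs, h0, h1, hu, hdec,
      Finset.sum_congr rfl fun i _ => by rw [fsep_pure hne (hu i)]⟩
  · rintro ⟨k, p, ψs, h0, h1, hu, hdec, rfl⟩
    exact ⟨k, p, ψs, h0, h1, hu, hdec,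
      Finset.sum_congr rfl fun i _ => by rw [fsep_pure hne (hu i)]⟩

end PartC
section MoreHelpers

variable {ι : Type*} [Fintype ι] [DecidableEq ι]

lemma inn_zero_right (u : ι → ℂ) : inn u 0 = 0 := by simp [inn]

lemma normalize_family {J : Type*} [Fintype J] (w : J → ι → ℂ) (ψ₀ : ι → ℂ)
    (hψ₀ : IsUnitVec ψ₀) :
    ∃ (p : J → ℝ) (ψ : J → ι → ℂ), (∀ j, 0 ≤ p j) ∧ (∀ j, IsUnitVec (ψ j)) ∧
      (∀ j, w j = ((Real.sqrt (p j) : ℝ) : ℂ) • ψ j) ∧ (∀ j, p j = (inn (w j) (w j)).re) := by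
  classical
  refine ⟨fun j => (inn (w j) (w j)).re,
    fun j => if h : (inn (w j) (w j)).re = 0 then ψ₀
      else (((Real.sqrt ((inn (w j) (w j)).re))⁻¹ : ℝ) : ℂ) • w j,
    fun j => inn_self_nonneg_re _, ?_, ?_, fun j => rfl⟩
  · intro j
    by_cases h : (inn (w j) (w j)).re = 0
    · simp only [dif_pos h]; exact hψ₀
    · simp only [dif_neg h]
      set t := (inn (w j) (w j)).re with ht
      have ht0 : 0 < t := lt_of_le_of_ne (inn_self_nonneg_re _) (Ne.symm h)
      have hs : Real.sqrt t ≠ 0 := by positivity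
      have hkey : ((Real.sqrt t)⁻¹ : ℝ) * (((Real.sqrt t)⁻¹ : ℝ) * t) = 1 := by
        rw [← Real.mul_self_sqrt ht0.le]
        field_simp
        rw [Real.sqrt_sq (Real.sqrt_nonneg _)]
      rw [IsUnitVec, inn_smul_left, inn_smul_right, inn_self_coe (w j), ← ht,
        Complex.star_def, Complex.conj_ofReal, ← Complex.ofReal_mul, ← Complex.ofReal_mul,
        hkey, Complex.ofReal_one]
  · intro j
    by_cases h : (inn (w j) (w j)).re = 0
    · simp only [dif_pos h]
      have hw0 : w j = 0 := by
        apply eq_zero_of_inn_self_eq_zero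
        rw [inn_self_coe (w j), h, Complex.ofReal_zero]
      rw [hw0]
      simp [inn]
    · have ht0 : 0 < (inn (w j) (w j)).re :=
        lt_of_le_of_ne (inn_self_nonneg_re _) (Ne.symm h)
      simp only [dif_neg h]
      rw [smul_smul, ← Complex.ofReal_mul,
        mul_inv_cancel₀ (by positivity : Real.sqrt (inn (w j) (w j)).re ≠ 0),
        Complex.ofReal_one, one_smul]

lemma sum_proj_sum_smul {J κ : Type*} [Fintype J] [Fintype κ] [DecidableEq κ]
    (s : κ → J → ℂ) (horth : ∀ k l, inn (s k) (s l) = if k = l then 1 else 0)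
    (A : κ → ι → ℂ) :
    ∑ j, proj (fun x => ∑ k, star (s k j) * A k x) = ∑ k, proj (A k) := by
  ext x y
  rw [Matrix.sum_apply, Matrix.sum_apply]
  have lhs : ∀ j, proj (fun x => ∑ k, star (s k j) * A k x) x y
      = ∑ k, ∑ l, (star (s k j) * s l j) * (A k x * star (A l y)) := by
    intro j
    simp only [proj]
    rw [star_sum, Finset.sum_mul_sum]
    refine Finset.sum_congr rfl fun k _ => Finset.sum_congr rfl fun l _ => ?_
    rw [star_mul', star_star]
    ring
  simp only [lhs]
  rw [Finset.sum_comm]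
  have hkl : ∀ k, (∑ j, ∑ l, (star (s k j) * s l j) * (A k x * star (A l y)))
      = ∑ l, (inn (s k) (s l)) * (A k x * star (A l y)) := by
    intro k
    rw [Finset.sum_comm]
    refine Finset.sum_congr rfl fun l _ => ?_
    rw [inn, Finset.sum_mul]
  simp only [hkl, horth]
  refine Finset.sum_congr rfl fun k _ => ?_
  rw [Finset.sum_eq_single k]
  · simp [proj]
  · intro l _ hl
    rw [if_neg (Ne.symm hl), zero_mul]
  · intro hmem
    exact absurd (Finset.mem_univ k) hmem

lemma conj_sum_proj {R : Matrix ι ι ℂ} (hR : R.IsHermitian) {J : Type*} [Fintype J]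
    (q : J → ℝ) (hq : ∀ j, 0 ≤ q j) (φ : J → ι → ℂ) :
    R * (∑ j, ((q j : ℝ) : ℂ) • proj (φ j)) * R
      = ∑ j, proj ((((Real.sqrt (q j)) : ℝ) : ℂ) • R.mulVec (φ j)) := by
  rw [Finset.mul_sum, Finset.sum_mul]
  refine Finset.sum_congr rfl fun j _ => ?_
  rw [mul_smul_comm, smul_mul_assoc, mul_proj_mul R hR, proj_smul]
  congr 1
  rw [Complex.star_def, Complex.conj_ofReal, ← Complex.ofReal_mul, Real.mul_self_sqrt (hq j)]

end MoreHelpers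

section D2sec

variable {n : ℕ} {d : Fin n → ℕ}

def D2 (ρ : Matrix (∀ j, Fin (d j)) (∀ j, Fin (d j)) ℂ) : Set ℝ :=
  {x | ∃ (k : ℕ) (p : Fin k → ℝ) (ψs : Fin k → (∀ j, Fin (d j)) → ℂ),
      (∀ i, 0 ≤ p i) ∧ ∑ i, p i = 1 ∧ (∀ i, IsUnitVec (ψs i)) ∧
      ρ = ∑ i, (p i : ℂ) • proj (ψs i) ∧
      x = ∑ i, p i * (Lmax (ψs i)) ^ 2}

lemma mem_D2 (ρ : Matrix (∀ j, Fin (d j)) (∀ j, Fin (d j)) ℂ)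
    {J : Type*} [Fintype J] (p : J → ℝ) (ψs : J → (∀ j, Fin (d j)) → ℂ)
    (h0 : ∀ j, 0 ≤ p j) (h1 : ∑ j, p j = 1) (hu : ∀ j, IsUnitVec (ψs j))
    (hdec : ρ = ∑ j, ((p j : ℝ) : ℂ) • proj (ψs j)) :
    (∑ j, p j * (Lmax (ψs j)) ^ 2) ∈ D2 ρ := by
  let e := Fintype.equivFin J
  refine ⟨Fintype.card J, p ∘ e.symm, ψs ∘ e.symm, fun i => h0 _, ?_, fun i => hu _, ?_, ?_⟩
  · rw [← h1]
    exact Fintype.sum_equiv e.symm _ _ fun i => rfl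
  · rw [hdec]
    exact (Fintype.sum_equiv e.symm _ _ fun i => rfl).symm
  · exact (Fintype.sum_equiv e.symm _ _ fun i => rfl).symm

lemma D2_le_one (hprod : ∃ φ : (∀ j, Fin (d j)) → ℂ, IsProdVec φ ∧ IsUnitVec φ)
    {ρ : Matrix (∀ j, Fin (d j)) (∀ j, Fin (d j)) ℂ} :
    ∀ x ∈ D2 ρ, x ≤ 1 := by
  rintro x ⟨k, p, ψs, h0, h1, hu, _, rfl⟩
  calc ∑ i, p i * (Lmax (ψs i)) ^ 2 ≤ ∑ i, p i * 1 := by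
        refine Finset.sum_le_sum fun i _ => mul_le_mul_of_nonneg_left ?_ (h0 i)
        have hL1 : Lmax (ψs i) ≤ 1 := lmax_le_one (hu i) hprod
        have hL0 : 0 ≤ Lmax (ψs i) := lmax_nonneg (hu i) hprod
        nlinarith
    _ = 1 := by simp [h1]

end D2sec
section LemmaA

variable {n : ℕ} {d : Fin n → ℕ}

lemma fid_le_D2 {ρ σ : Matrix (∀ j, Fin (d j)) (∀ j, Fin (d j)) ℂ}
    (hρ : IsDensity ρ) (hσ : IsSepState σ) (hne : Nonempty (∀ j, Fin (d j))) :
    ∃ y ∈ D2 ρ, fid ρ σ ≤ y := by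
  classical
  obtain ⟨φs, hps, hus⟩ := exists_prod_unit hne
  obtain ⟨m, q₀, φ₀, hq₀, hq₀sum, hφ₀, hσeq⟩ := hσ
  set J := (Fin m) ⊕ (∀ j, Fin (d j)) with hJ
  set q : J → ℝ := Sum.elim q₀ (fun _ => 0) with hq
  set φ : J → (∀ j, Fin (d j)) → ℂ := Sum.elim φ₀ (fun _ => φs) with hφ
  have hq' : ∀ j, 0 ≤ q j := by
    rintro (j|j)
    · simp only [hq, Sum.elim_inl]; exact hq₀ j
    · simp only [hq, Sum.elim_inr]; exact le_refl 0
  have hφprod : ∀ j, IsProdVec (φ j) := by rintro (j|j); exacts [(hφ₀ j).1, hps]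
  have hφunit : ∀ j, IsUnitVec (φ j) := by rintro (j|j); exacts [(hφ₀ j).2, hus]
  have hσJ : σ = ∑ j : J, ((q j : ℝ) : ℂ) • proj (φ j) := by
    rw [hσeq, Fintype.sum_sum_type]
    simp [hq, hφ]
  have hqsum1 : ∑ j, q j = 1 := by
    rw [Fintype.sum_sum_type]
    simp [hq, hq₀sum]
  have hcard : Fintype.card (∀ j, Fin (d j)) ≤ Fintype.card J := by
    show Fintype.card (∀ j, Fin (d j)) ≤ Fintype.card ((Fin m) ⊕ (∀ j, Fin (d j)))
    rw [Fintype.card_sum]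
    exact Nat.le_add_left _ _
  -- spectral decomposition of ρ
  obtain ⟨v, lam, hlam0, horthv, hcompv, hρdec, hRdef⟩ := spectral_psd hρ.1
  have hRherm : (psqrt ρ).IsHermitian := by
    rw [hRdef]; exact isHermitian_sum_smul_proj _ _
  have hRR : psqrt ρ * psqrt ρ = ρ := by
    rw [hRdef, sum_smul_proj_mul v horthv, hρdec]
    refine Finset.sum_congr rfl fun k _ => ?_
    rw [← Complex.ofReal_mul, Real.mul_self_sqrt (hlam0 k)]
  set N := psqrt ρ * σ * psqrt ρ with hNdef0
  set c : J → (∀ j, Fin (d j)) → ℂ :=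
    fun j => ((Real.sqrt (q j) : ℝ) : ℂ) • (psqrt ρ).mulVec (φ j) with hc
  have hN : N = ∑ j : J, proj (c j) := by
    rw [hNdef0, hσJ, conj_sum_proj hRherm q hq' φ]
  have hNpsd : N.PosSemidef := by
    rw [hN]; exact posSemidef_sum _ _ fun j _ => posSemidef_proj _
  obtain ⟨u, mu, hmu0, horthu, hcompu, hNdec, hsqrtN⟩ := spectral_psd hNpsd
  have huunit : ∀ k, IsUnitVec (u k) := fun k => by have := horthu k k; simpa [IsUnitVec] using this
  have htr : (psqrt N).trace = ((∑ k, Real.sqrt (mu k) : ℝ) : ℂ) := by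
    rw [hsqrtN]; exact trace_sum_smul_proj u _ huunit
  set r : (∀ j, Fin (d j)) → J → ℂ := fun k j => inn (c j) (u k) with hr
  have hgram : ∀ k l, inn (r k) (r l) = if k = l then ((mu k : ℝ) : ℂ) else 0 := by
    intro k l
    show inn (fun j => inn (c j) (u k)) (fun j => inn (c j) (u l)) = _
    rw [gram_r c (u k) (u l), ← hN, hNdec, inn_eig' u horthu]
  set T : Set (∀ j, Fin (d j)) := {k | mu k ≠ 0} with hT
  set r' : (∀ j, Fin (d j)) → J → ℂ :=
    fun k => (((Real.sqrt (mu k))⁻¹ : ℝ) : ℂ) • r k with hr'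
  have horthr' : ∀ k ∈ T, ∀ l ∈ T, inn (r' k) (r' l) = if k = l then 1 else 0 := by
    intro k hk l hl
    show inn ((((Real.sqrt (mu k))⁻¹ : ℝ) : ℂ) • r k) ((((Real.sqrt (mu l))⁻¹ : ℝ) : ℂ) • r l) = _
    rw [inn_smul_left, inn_smul_right, hgram, Complex.star_def, Complex.conj_ofReal]
    by_cases h : k = l
    · subst h
      have hmuk : 0 < mu k := lt_of_le_of_ne (hmu0 k) (Ne.symm hk)
      have hsne : Real.sqrt (mu k) ≠ 0 := by positivity
      rw [if_pos rfl, if_pos rfl, ← Complex.ofReal_mul, ← Complex.ofReal_mul]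
      rw [show (Real.sqrt (mu k))⁻¹ * ((Real.sqrt (mu k))⁻¹ * mu k) = 1 from by
        rw [← Real.mul_self_sqrt hmuk.le]; field_simp; rw [Real.sqrt_sq (Real.sqrt_nonneg _)]]
      rw [Complex.ofReal_one]
    · rw [if_neg h, if_neg h, mul_zero, mul_zero]
  obtain ⟨s, hsT, horths⟩ := extend_orthonormal hcard T r' horthr'
  set w : J → (∀ j, Fin (d j)) → ℂ :=
    fun j => ∑ k, star (s k j) • (psqrt ρ).mulVec (u k) with hw
  have hweq : ∀ j, w j = fun x => ∑ k, star (s k j) * (psqrt ρ).mulVec (u k) x := by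
    intro j
    funext x
    simp only [hw, Finset.sum_apply, Pi.smul_apply, smul_eq_mul]
  have hsumw : (∑ j, proj (w j)) = ρ := by
    calc ∑ j, proj (w j)
        = ∑ j, proj (fun x => ∑ k, star (s k j) * (psqrt ρ).mulVec (u k) x) := by
          exact Finset.sum_congr rfl fun j _ => by rw [hweq j]
      _ = ∑ k, proj ((psqrt ρ).mulVec (u k)) :=
          sum_proj_sum_smul s horths (fun k => (psqrt ρ).mulVec (u k))
      _ = psqrt ρ * (∑ k, proj (u k)) * psqrt ρ := by
          rw [Finset.mul_sum, Finset.sum_mul]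
          exact Finset.sum_congr rfl fun k _ => (mul_proj_mul _ hRherm _).symm
      _ = psqrt ρ * 1 * psqrt ρ := by rw [hcompu]
      _ = ρ := by rw [mul_one, hRR]
  obtain ⟨p, ψs, hp0, hψunit, hwdec, hpdef⟩ := normalize_family w φs hus
  have hρdec2 : ρ = ∑ j, ((p j : ℝ) : ℂ) • proj (ψs j) := by
    rw [← hsumw]
    refine Finset.sum_congr rfl fun j _ => ?_
    rw [hwdec j, proj_smul, Complex.star_def, Complex.conj_ofReal, ← Complex.ofReal_mul,
      Real.mul_self_sqrt (hp0 j)]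
  have hpsum : ∑ j, p j = 1 := by
    have h2 : ((∑ j, p j : ℝ) : ℂ) = 1 := by
      calc ((∑ j, p j : ℝ) : ℂ) = ∑ j, ((p j : ℝ) : ℂ) := by push_cast; rfl
        _ = ∑ j, (proj (w j)).trace := Finset.sum_congr rfl fun j _ => by
              rw [trace_proj, inn_self_coe, ← hpdef j]
        _ = ρ.trace := by rw [← Matrix.trace_sum, hsumw]
        _ = 1 := hρ.2
    exact_mod_cast h2
  -- key identity
  have hstep1 : ∀ j, ((Real.sqrt (q j) : ℝ) : ℂ) * inn (φ j) (w j)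
      = ∑ k, star (s k j) * r k j := by
    intro j
    rw [hweq j]
    have : inn (φ j) (fun x => ∑ k, star (s k j) * (psqrt ρ).mulVec (u k) x)
        = inn (φ j) (∑ k, star (s k j) • (psqrt ρ).mulVec (u k)) := by
      congr 1
      funext x
      simp only [Finset.sum_apply, Pi.smul_apply, smul_eq_mul]
    rw [this, inn_sum_right, Finset.mul_sum]
    refine Finset.sum_congr rfl fun k _ => ?_
    rw [inn_smul_right]
    have hrkj : r k j = ((Real.sqrt (q j) : ℝ) : ℂ) * inn (φ j) ((psqrt ρ).mulVec (u k)) := by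
      show inn (c j) (u k) = _
      rw [hc]
      show inn (((Real.sqrt (q j) : ℝ) : ℂ) • (psqrt ρ).mulVec (φ j)) (u k) = _
      rw [inn_smul_left, Complex.star_def, Complex.conj_ofReal]
      congr 1
      rw [inn_mulVec, hRherm.eq]
    rw [hrkj]
    ring
  have hstep3 : ∀ k, inn (s k) (r k) = ((Real.sqrt (mu k) : ℝ) : ℂ) := by
    intro k
    by_cases hk : mu k = 0
    · have hrk0 : r k = 0 := by
        apply eq_zero_of_inn_self_eq_zero
        rw [hgram k k, if_pos rfl, hk, Complex.ofReal_zero]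
      rw [hrk0, inn_zero_right, hk, Real.sqrt_zero, Complex.ofReal_zero]
    · have hmuk : 0 < mu k := lt_of_le_of_ne (hmu0 k) (Ne.symm hk)
      have hsne : Real.sqrt (mu k) ≠ 0 := by positivity
      rw [hsT k hk]
      show inn ((((Real.sqrt (mu k))⁻¹ : ℝ) : ℂ) • r k) (r k) = _
      rw [inn_smul_left, Complex.star_def, Complex.conj_ofReal, hgram k k, if_pos rfl,
        ← Complex.ofReal_mul]
      congr 1
      rw [← Real.mul_self_sqrt hmuk.le]
      field_simp
      rw [Real.sqrt_sq (Real.sqrt_nonneg _)]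
  have hkey : ((∑ k, Real.sqrt (mu k) : ℝ) : ℂ)
      = ∑ j, ((Real.sqrt (q j) : ℝ) : ℂ) * inn (φ j) (w j) := by
    calc ((∑ k, Real.sqrt (mu k) : ℝ) : ℂ)
        = ∑ k, ((Real.sqrt (mu k) : ℝ) : ℂ) := by push_cast; rfl
      _ = ∑ k, inn (s k) (r k) := Finset.sum_congr rfl fun k _ => (hstep3 k).symm
      _ = ∑ k, ∑ j, star (s k j) * r k j := rfl
      _ = ∑ j, ∑ k, star (s k j) * r k j := Finset.sum_comm
      _ = ∑ j, ((Real.sqrt (q j) : ℝ) : ℂ) * inn (φ j) (w j) :=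
          Finset.sum_congr rfl fun j _ => (hstep1 j).symm
  -- final estimate
  refine ⟨∑ j, p j * (Lmax (ψs j)) ^ 2, mem_D2 ρ p ψs hp0 hpsum hψunit hρdec2, ?_⟩
  have hfid : fid ρ σ = (∑ k, Real.sqrt (mu k)) ^ 2 := by
    rw [fid, ← hNdef0, htr, Complex.ofReal_re]
  set a : J → ℝ := fun j => ‖inn (φ j) (ψs j)‖ with haa
  have ha0 : ∀ j, 0 ≤ a j := fun j => norm_nonneg _
  have haL : ∀ j, a j ≤ Lmax (ψs j) := fun j =>
    abs_inn_le_lmax (hψunit j) (hφprod j) (hφunit j)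
  have habs : ∀ j, ‖inn (φ j) (w j)‖ = Real.sqrt (p j) * a j := by
    intro j
    rw [hwdec j, inn_smul_right, norm_mul, Complex.norm_real, Real.norm_eq_abs,
      abs_of_nonneg (Real.sqrt_nonneg _)]
  have hbound : ∑ k, Real.sqrt (mu k) ≤ ∑ j, Real.sqrt (q j) * (Real.sqrt (p j) * a j) := by
    have h1 : ∑ k, Real.sqrt (mu k) = (((∑ k, Real.sqrt (mu k) : ℝ) : ℂ)).re :=
      (Complex.ofReal_re _).symm
    rw [h1, hkey]
    calc (∑ j, ((Real.sqrt (q j) : ℝ) : ℂ) * inn (φ j) (w j)).re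
        ≤ ‖∑ j, ((Real.sqrt (q j) : ℝ) : ℂ) * inn (φ j) (w j)‖ :=
          Complex.re_le_norm _
      _ ≤ ∑ j, ‖((Real.sqrt (q j) : ℝ) : ℂ) * inn (φ j) (w j)‖ :=
          norm_sum_le _ _
      _ = ∑ j, Real.sqrt (q j) * (Real.sqrt (p j) * a j) := by
          refine Finset.sum_congr rfl fun j _ => ?_
          rw [norm_mul, Complex.norm_real, Real.norm_eq_abs, abs_of_nonneg (Real.sqrt_nonneg _), habs j]
  have hcs : (∑ j, Real.sqrt (q j) * (Real.sqrt (p j) * a j)) ^ 2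
      ≤ (∑ j, q j) * (∑ j, p j * (a j) ^ 2) := by
    have h2 := Finset.sum_mul_sq_le_sq_mul_sq Finset.univ
      (fun j => Real.sqrt (q j)) (fun j => Real.sqrt (p j) * a j)
    calc (∑ j, Real.sqrt (q j) * (Real.sqrt (p j) * a j)) ^ 2
        ≤ (∑ j, (Real.sqrt (q j)) ^ 2) * (∑ j, (Real.sqrt (p j) * a j) ^ 2) := h2
      _ = (∑ j, q j) * (∑ j, p j * (a j) ^ 2) := by
          congr 1
          · exact Finset.sum_congr rfl fun j _ => Real.sq_sqrt (hq' j)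
          · refine Finset.sum_congr rfl fun j _ => ?_
            rw [mul_pow, Real.sq_sqrt (hp0 j)]
  have htnn : 0 ≤ ∑ k, Real.sqrt (mu k) := Finset.sum_nonneg fun k _ => Real.sqrt_nonneg _
  rw [hfid]
  calc (∑ k, Real.sqrt (mu k)) ^ 2
      ≤ (∑ j, Real.sqrt (q j) * (Real.sqrt (p j) * a j)) ^ 2 := pow_le_pow_left₀ htnn hbound 2
    _ ≤ (∑ j, q j) * (∑ j, p j * (a j) ^ 2) := hcs
    _ = ∑ j, p j * (a j) ^ 2 := by rw [hqsum1, one_mul]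
    _ ≤ ∑ j, p j * (Lmax (ψs j)) ^ 2 := Finset.sum_le_sum fun j _ =>
        mul_le_mul_of_nonneg_left (pow_le_pow_left₀ (ha0 j) (haL j) 2) (hp0 j)

end LemmaA
section EvenMoreHelpers

variable {ι : Type*} [Fintype ι] [DecidableEq ι]

lemma herm_shift {M : Matrix ι ι ℂ} (hM : M.IsHermitian) (a b : ι → ℂ) :
    inn a (M.mulVec b) = inn (M.mulVec a) b := by
  rw [inn_mulVec, hM.eq]

lemma conj_sum_proj' {R : Matrix ι ι ℂ} (hR : R.IsHermitian) {J : Type*} [Fintype J]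
    (p : J → ℝ) (ψ : J → ι → ℂ) :
    R * (∑ j, ((p j : ℝ) : ℂ) • proj (ψ j)) * R
      = ∑ j, ((p j : ℝ) : ℂ) • proj (R.mulVec (ψ j)) := by
  rw [Finset.mul_sum, Finset.sum_mul]
  refine Finset.sum_congr rfl fun j _ => ?_
  rw [mul_smul_comm, smul_mul_assoc, mul_proj_mul R hR]

lemma abs_sum_mul_le {κ : Type*} [Fintype κ] (f g : κ → ℂ) :
    ‖∑ i, f i * g i‖
      ≤ Real.sqrt (∑ i, ‖f i‖ ^ 2) * Real.sqrt (∑ i, ‖g i‖ ^ 2) := by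
  calc ‖∑ i, f i * g i‖ ≤ ∑ i, ‖f i * g i‖ := norm_sum_le _ _
    _ = ∑ i, ‖f i‖ * ‖g i‖ :=
        Finset.sum_congr rfl fun i _ => norm_mul _ _
    _ ≤ Real.sqrt (∑ i, ‖f i‖ ^ 2) * Real.sqrt (∑ i, ‖g i‖ ^ 2) := by
        have h := Finset.sum_mul_sq_le_sq_mul_sq Finset.univ
          (fun i => ‖f i‖) (fun i => ‖g i‖)
        have hnn : 0 ≤ ∑ i, ‖f i‖ * ‖g i‖ :=
          Finset.sum_nonneg fun i _ => mul_nonneg (norm_nonneg _) (norm_nonneg _)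
        have h2 : (∑ i, ‖f i‖ * ‖g i‖) ^ 2
            ≤ (Real.sqrt (∑ i, ‖f i‖ ^ 2) * Real.sqrt (∑ i, ‖g i‖ ^ 2)) ^ 2 := by
          rw [mul_pow, Real.sq_sqrt (Finset.sum_nonneg fun i _ => sq_nonneg _),
            Real.sq_sqrt (Finset.sum_nonneg fun i _ => sq_nonneg _)]
          exact h
        have h3 : 0 ≤ Real.sqrt (∑ i, ‖f i‖ ^ 2) * Real.sqrt (∑ i, ‖g i‖ ^ 2) :=
          mul_nonneg (Real.sqrt_nonneg _) (Real.sqrt_nonneg _)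
        nlinarith
    
end EvenMoreHelpers
section LemmaB

variable {n : ℕ} {d : Fin n → ℕ}

lemma D2_le_fsep {ρ : Matrix (∀ j, Fin (d j)) (∀ j, Fin (d j)) ℂ}
    (hρ : IsDensity ρ) (hne : Nonempty (∀ j, Fin (d j)))
    (hFbdd : BddAbove {x | ∃ σ, IsSepState σ ∧ x = fid ρ σ}) :
    ∀ y ∈ D2 ρ, y ≤ Fsep ρ := by
  classical
  obtain ⟨φprod, hps, hus⟩ := exists_prod_unit hne
  rintro y ⟨k, p, ψs, hp0, hpsum, hψu, hρdec, rfl⟩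
  have hF0 : 0 ≤ Fsep ρ := by
    refine le_trans ?_ (le_csSup hFbdd ⟨proj φprod, sep_of_prod_unit hps hus, rfl⟩)
    rw [fid]
    positivity
  refine le_of_forall_pos_le_add fun ε hε => ?_
  have hhalf : 0 < ε / 2 := half_pos hε
  have hch := fun i => exists_near_lmax (ψ := ψs i) ⟨φprod, hps, hus⟩ hhalf
  choose φ hφp hφu hφlt using hch
  set a : Fin k → ℝ := fun i => ‖inn (φ i) (ψs i)‖ with ha
  have ha0 : ∀ i, 0 ≤ a i := fun i => norm_nonneg _
  have haL : ∀ i, a i ≤ Lmax (ψs i) := fun i => abs_inn_le_lmax (hψu i) (hφp i) (hφu i)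
  have hL1 : ∀ i, Lmax (ψs i) ≤ 1 := fun i => lmax_le_one (hψu i) ⟨φprod, hps, hus⟩
  have hsq : ∀ i, (Lmax (ψs i)) ^ 2 ≤ (a i) ^ 2 + ε := by
    intro i
    have h1 := hφlt i
    have h2 := haL i; have h3 := hL1 i; have h4 := ha0 i
    have h5 : Lmax (ψs i) - ε/2 < a i := by simpa [ha] using h1
    nlinarith
  set S := ∑ i, p i * (a i) ^ 2 with hS
  have hS0 : 0 ≤ S := Finset.sum_nonneg fun i _ => mul_nonneg (hp0 i) (sq_nonneg _)
  have hyS : (∑ i, p i * (Lmax (ψs i)) ^ 2) ≤ S + ε := by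
    calc ∑ i, p i * (Lmax (ψs i)) ^ 2 ≤ ∑ i, p i * ((a i) ^ 2 + ε) :=
          Finset.sum_le_sum fun i _ => mul_le_mul_of_nonneg_left (hsq i) (hp0 i)
      _ = S + ε := by
          simp only [mul_add]
          rw [Finset.sum_add_distrib, ← Finset.sum_mul, hpsum, one_mul, hS]
  by_cases hSz : S = 0
  · rw [hSz] at hyS
    linarith
  have hSpos : 0 < S := lt_of_le_of_ne hS0 (Ne.symm hSz)
  suffices hmain : S ≤ Fsep ρ by linarith
  set q : Fin k → ℝ := fun i => p i * (a i) ^ 2 / S with hqd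
  have hq0 : ∀ i, 0 ≤ q i := fun i => div_nonneg (mul_nonneg (hp0 i) (sq_nonneg _)) hS0
  have hqsum : ∑ i, q i = 1 := by
    simp only [hqd]
    rw [← Finset.sum_div, ← hS, div_self hSz]
  set σ' := ∑ i, ((q i : ℝ) : ℂ) • proj (φ i) with hσ'
  have hsep : IsSepState σ' := ⟨k, q, φ, hq0, hqsum, fun i => ⟨hφp i, hφu i⟩, hσ'⟩
  -- spectral of ρ
  obtain ⟨v, lam, hlam0, horthv, hcompv, hρspec, hRdef⟩ := spectral_psd hρ.1
  have hRherm : (psqrt ρ).IsHermitian := by rw [hRdef]; exact isHermitian_sum_smul_proj _ _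
  set gco : (∀ j, Fin (d j)) → ℝ :=
    fun k' => if lam k' = 0 then 0 else (Real.sqrt (lam k'))⁻¹ with hgco
  set Pco : (∀ j, Fin (d j)) → ℝ := fun k' => if lam k' = 0 then 0 else 1 with hPco
  set g := ∑ k', ((gco k' : ℝ) : ℂ) • proj (v k') with hgd
  set P := ∑ k', ((Pco k' : ℝ) : ℂ) • proj (v k') with hPd
  have hgherm : g.IsHermitian := by rw [hgd]; exact isHermitian_sum_smul_proj _ _
  have hPherm : P.IsHermitian := by rw [hPd]; exact isHermitian_sum_smul_proj _ _
  have hgR : g * psqrt ρ = P := by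
    rw [hgd, hRdef, sum_smul_proj_mul v horthv, hPd]
    refine Finset.sum_congr rfl fun k' _ => ?_
    congr 1
    simp only [hgco, hPco]
    by_cases h : lam k' = 0
    · simp [h]
    · have hl : 0 < lam k' := lt_of_le_of_ne (hlam0 k') (Ne.symm h)
      have hs : Real.sqrt (lam k') ≠ 0 := by positivity
      rw [if_neg h, if_neg h, ← Complex.ofReal_mul, Complex.ofReal_one]
      congr 1
      field_simp
  have hgρg : g * ρ * g = P := by
    rw [hgd, hρspec, sum_smul_proj_mul v horthv, sum_smul_proj_mul v horthv, hPd]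
    refine Finset.sum_congr rfl fun k' _ => ?_
    congr 1
    simp only [hgco, hPco]
    by_cases h : lam k' = 0
    · simp [h]
    · have hl : 0 < lam k' := lt_of_le_of_ne (hlam0 k') (Ne.symm h)
      have hs : Real.sqrt (lam k') ≠ 0 := by positivity
      rw [if_neg h, if_neg h, ← Complex.ofReal_mul, ← Complex.ofReal_mul, Complex.ofReal_one]
      congr 1
      rw [← Real.mul_self_sqrt hl.le]
      field_simp
      rw [Real.sqrt_sq (Real.sqrt_nonneg _)]
  have hPψ : ∀ i, p i ≠ 0 → P.mulVec (ψs i) = ψs i := by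
    intro i hpi
    have hv0 : ∀ k', lam k' = 0 → inn (ψs i) (v k') = 0 := by
      intro k' hl
      have h1 : inn (v k') (ρ.mulVec (v k')) = 0 := by
        rw [hρspec, inn_eig' v horthv, if_pos rfl, hl, Complex.ofReal_zero]
      have h2 : inn (v k') (ρ.mulVec (v k'))
          = ((∑ i', p i' * ‖inn (ψs i') (v k')‖ ^ 2 : ℝ) : ℂ) := by
        rw [hρdec]
        exact inn_proj_sum (v k') p ψs
      rw [h1] at h2
      have h3 : (∑ i', p i' * ‖inn (ψs i') (v k')‖ ^ 2 : ℝ) = 0 := by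
        exact_mod_cast h2.symm
      have h4 : p i * ‖inn (ψs i) (v k')‖ ^ 2 = 0 :=
        (Finset.sum_eq_zero_iff_of_nonneg
          (fun i' _ => mul_nonneg (hp0 i') (sq_nonneg _))).1 h3 i (Finset.mem_univ i)
      rcases mul_eq_zero.1 h4 with h | h
      · exact absurd h hpi
      · have h5 : ‖inn (ψs i) (v k')‖ = 0 := by
          exact pow_eq_zero_iff two_ne_zero |>.1 h
        exact norm_eq_zero.1 h5
    have hψexp : ψs i = ∑ k', inn (v k') (ψs i) • v k' := by
      conv_lhs => rw [show ψs i = (1 : Matrix _ _ ℂ).mulVec (ψs i) from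
        (Matrix.one_mulVec _).symm, ← hcompv]
      rw [sum_mulVec']
      exact Finset.sum_congr rfl fun k' _ => proj_mulVec _ _
    rw [hPd, sum_mulVec']
    conv_rhs => rw [hψexp]
    refine Finset.sum_congr rfl fun k' _ => ?_
    rw [Matrix.smul_mulVec, proj_mulVec]
    by_cases h : lam k' = 0
    · have hz : inn (v k') (ψs i) = 0 := by
        rw [show inn (v k') (ψs i) = star (inn (ψs i) (v k')) from inn_conj _ _, hv0 k' h,
          star_zero]
      rw [hz]
      simp
    · simp only [hPco, if_neg h, Complex.ofReal_one, one_smul]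
  -- y vectors
  set z : Fin k → ℂ := fun i => inn (ψs i) (φ i) with hz
  have haz : ∀ i, a i = ‖z i‖ := by
    intro i
    simp only [ha, hz]
    rw [show inn (φ i) (ψs i) = star (inn (ψs i) (φ i)) from inn_conj _ _,
      Complex.star_def, Complex.norm_conj]
  set t : Fin k → ℂ := fun i => if z i = 0 then ((Real.sqrt (p i) : ℝ) : ℂ)
    else ((Real.sqrt (p i) : ℝ) : ℂ) * (z i / ((‖z i‖ : ℝ) : ℂ)) with htd
  have hnormt : ∀ i, Complex.normSq (t i) = p i := by
    intro i
    simp only [htd]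
    by_cases h : z i = 0
    · rw [if_pos h, Complex.normSq_ofReal, Real.mul_self_sqrt (hp0 i)]
    · have habsz : ‖z i‖ ≠ 0 := fun hc => h (norm_eq_zero.1 hc)
      rw [if_neg h, Complex.normSq_mul, Complex.normSq_ofReal, Complex.normSq_div,
        Complex.normSq_ofReal, Real.mul_self_sqrt (hp0 i), ← Complex.sq_norm]
      field_simp
  set yv : Fin k → (∀ j, Fin (d j)) → ℂ := fun i => t i • g.mulVec (ψs i) with hyv
  have hsumy : ∑ i, proj (yv i) = P := by
    calc ∑ i, proj (yv i) = ∑ i, ((p i : ℝ) : ℂ) • proj (g.mulVec (ψs i)) := by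
          refine Finset.sum_congr rfl fun i _ => ?_
          show proj (t i • g.mulVec (ψs i)) = _
          rw [proj_smul]
          congr 1
          rw [show t i * star (t i) = ((Complex.normSq (t i) : ℝ) : ℂ) from by
            rw [Complex.star_def, Complex.mul_conj], hnormt i]
      _ = g * (∑ i, ((p i : ℝ) : ℂ) • proj (ψs i)) * g := (conj_sum_proj' hgherm p ψs).symm
      _ = g * ρ * g := by rw [← hρdec]
      _ = P := hgρg
  -- N and its spectral decomposition
  set N := psqrt ρ * σ' * psqrt ρ with hNd
  set c : Fin k → (∀ j, Fin (d j)) → ℂ :=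
    fun i => ((Real.sqrt (q i) : ℝ) : ℂ) • (psqrt ρ).mulVec (φ i) with hcd
  have hN : N = ∑ i, proj (c i) := by rw [hNd, hσ', conj_sum_proj hRherm q hq0 φ]
  have hNpsd : N.PosSemidef := by
    rw [hN]; exact posSemidef_sum _ _ fun i _ => posSemidef_proj _
  obtain ⟨u, mu, hmu0, horthu, hcompu, hNdec, hsqrtN⟩ := spectral_psd hNpsd
  have huunit : ∀ k', IsUnitVec (u k') := fun k' => by have := horthu k' k'; simpa [IsUnitVec] using this
  have htr : (psqrt N).trace = ((∑ k', Real.sqrt (mu k') : ℝ) : ℂ) := by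
    rw [hsqrtN]; exact trace_sum_smul_proj u _ huunit
  -- overlap computation
  have hterm : ∀ i, inn (yv i) (c i) = ((Real.sqrt (p i) * Real.sqrt (q i) * a i : ℝ) : ℂ) := by
    intro i
    show inn (t i • g.mulVec (ψs i)) (((Real.sqrt (q i) : ℝ) : ℂ) • (psqrt ρ).mulVec (φ i)) = _
    rw [inn_smul_left, inn_smul_right]
    have h1 : inn (g.mulVec (ψs i)) ((psqrt ρ).mulVec (φ i))
        = inn (ψs i) (P.mulVec (φ i)) := by
      rw [← herm_shift hgherm, Matrix.mulVec_mulVec, hgR]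
    rw [h1]
    by_cases hpi : p i = 0
    · have hqi : q i = 0 := by simp only [hqd]; rw [hpi]; simp
      rw [hpi, hqi]
      simp
    · have h2 : inn (ψs i) (P.mulVec (φ i)) = z i := by
        rw [herm_shift hPherm, hPψ i hpi]
      rw [h2]
      by_cases hzi : z i = 0
      · have hai : a i = 0 := by rw [haz i, hzi, norm_zero]
        rw [hzi, hai]
        simp
      · have habsz : (‖z i‖ : ℂ) ≠ 0 := by
          simp only [ne_eq, Complex.ofReal_eq_zero]
          exact fun hc => hzi (norm_eq_zero.1 hc)
        simp only [htd, if_neg hzi]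
        have key : (starRingEnd ℂ) (z i) * z i = ((‖z i‖ : ℝ) : ℂ) ^ 2 := by
          rw [mul_comm, Complex.mul_conj, Complex.normSq_eq_norm_sq]
          push_cast
          ring
        rw [haz i]
        simp only [star_mul', Complex.star_def, map_div₀, Complex.conj_ofReal]
        field_simp
        push_cast
        linear_combination (((Real.sqrt (p i)) : ℂ) * ((Real.sqrt (q i)) : ℂ)) * key
  have hsum3 : ∑ i, inn (yv i) (c i) = ((Real.sqrt S : ℝ) : ℂ) := by
    have h1 : ∀ i, Real.sqrt (p i) * Real.sqrt (q i) * a i = p i * (a i) ^ 2 / Real.sqrt S := by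
      intro i
      have hqv : q i = p i * (a i) ^ 2 / S := by simp only [hqd]
      rw [hqv]
      rw [show p i * (a i) ^ 2 / S = (p i * (a i) ^ 2) * S⁻¹ from div_eq_mul_inv _ _,
        Real.sqrt_mul (mul_nonneg (hp0 i) (sq_nonneg _)), Real.sqrt_mul (hp0 i),
        Real.sqrt_sq (ha0 i), Real.sqrt_inv]
      rw [div_eq_mul_inv]
      have : Real.sqrt (p i) * (Real.sqrt (p i) * a i * (Real.sqrt S)⁻¹) * a i
          = (Real.sqrt (p i) * Real.sqrt (p i)) * (a i * a i) * (Real.sqrt S)⁻¹ := by ring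
      rw [this, Real.mul_self_sqrt (hp0 i)]
      ring
    have h2 : (∑ i, p i * (a i) ^ 2 / Real.sqrt S) = Real.sqrt S := by
      rw [← Finset.sum_div, ← hS, Real.div_sqrt]
    calc ∑ i, inn (yv i) (c i)
        = ∑ i, ((Real.sqrt (p i) * Real.sqrt (q i) * a i : ℝ) : ℂ) :=
          Finset.sum_congr rfl fun i _ => hterm i
      _ = ((∑ i, Real.sqrt (p i) * Real.sqrt (q i) * a i : ℝ) : ℂ) := by push_cast; rfl
      _ = ((Real.sqrt S : ℝ) : ℂ) := by
          rw [Finset.sum_congr rfl fun i _ => h1 i, h2]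
  -- quadratic form bounds
  have hyk : ∀ k', (∑ i, ‖inn (yv i) (u k')‖ ^ 2) ≤ 1 := by
    intro k'
    have h1 : ((∑ i, ‖inn (yv i) (u k')‖ ^ 2 : ℝ) : ℂ)
        = inn (u k') (P.mulVec (u k')) := by
      rw [← inn_sum_proj yv (u k'), hsumy]
    have h2 : inn (u k') (P.mulVec (u k'))
        = ((∑ k'', Pco k'' * ‖inn (v k'') (u k')‖ ^ 2 : ℝ) : ℂ) := by
      rw [hPd]
      exact inn_proj_sum (u k') Pco v
    have h3 : (∑ k'', ‖inn (v k'') (u k')‖ ^ 2 : ℝ) = 1 := by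
      have h4 : ((∑ k'', ‖inn (v k'') (u k')‖ ^ 2 : ℝ) : ℂ) = 1 := by
        rw [← inn_sum_proj v (u k'), hcompv, Matrix.one_mulVec, huunit k']
      exact_mod_cast h4
    have h5 : (∑ i, ‖inn (yv i) (u k')‖ ^ 2 : ℝ)
        = ∑ k'', Pco k'' * ‖inn (v k'') (u k')‖ ^ 2 := by
      exact_mod_cast (h1.trans h2)
    rw [h5]
    calc ∑ k'', Pco k'' * ‖inn (v k'') (u k')‖ ^ 2
        ≤ ∑ k'', ‖inn (v k'') (u k')‖ ^ 2 := by
          refine Finset.sum_le_sum fun k'' _ => ?_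
          simp only [hPco]
          by_cases h : lam k'' = 0
          · rw [if_pos h, zero_mul]
            exact sq_nonneg _
          · rw [if_neg h, one_mul]
      _ = 1 := h3
  have hck : ∀ k', (∑ i, ‖inn (c i) (u k')‖ ^ 2 : ℝ) = mu k' := by
    intro k'
    have h1 : ((∑ i, ‖inn (c i) (u k')‖ ^ 2 : ℝ) : ℂ)
        = inn (u k') (N.mulVec (u k')) := by
      rw [← inn_sum_proj c (u k'), hN]
    have h2 : inn (u k') (N.mulVec (u k')) = ((mu k' : ℝ) : ℂ) := by
      rw [hNdec, inn_eig' u horthu, if_pos rfl]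
    exact_mod_cast h1.trans h2
  -- expansion
  have hexp : ((Real.sqrt S : ℝ) : ℂ) = ∑ k', ∑ i, inn (yv i) (u k') * inn (u k') (c i) := by
    rw [← hsum3, Finset.sum_congr rfl fun i _ => inn_expand hcompu (yv i) (c i)]
    exact Finset.sum_comm
  have hperk : ∀ k', ‖∑ i, inn (yv i) (u k') * inn (u k') (c i)‖
      ≤ Real.sqrt (mu k') := by
    intro k'
    calc ‖∑ i, inn (yv i) (u k') * inn (u k') (c i)‖
        ≤ Real.sqrt (∑ i, ‖inn (yv i) (u k')‖ ^ 2)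
          * Real.sqrt (∑ i, ‖inn (u k') (c i)‖ ^ 2) := abs_sum_mul_le _ _
      _ ≤ 1 * Real.sqrt (mu k') := by
          have e1 : (∑ i, ‖inn (u k') (c i)‖ ^ 2) = mu k' := by
            rw [← hck k']
            exact Finset.sum_congr rfl fun i _ => by
              rw [show inn (u k') (c i) = star (inn (c i) (u k')) from inn_conj _ _,
                Complex.star_def, Complex.norm_conj]
          rw [e1]
          refine mul_le_mul_of_nonneg_right ?_ (Real.sqrt_nonneg _)
          have h6 : Real.sqrt (∑ i, ‖inn (yv i) (u k')‖ ^ 2) ≤ Real.sqrt 1 :=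
            Real.sqrt_le_sqrt (hyk k')
          rwa [Real.sqrt_one] at h6
      _ = Real.sqrt (mu k') := one_mul _
  have hmajor : Real.sqrt S ≤ ∑ k', Real.sqrt (mu k') := by
    calc Real.sqrt S = (((Real.sqrt S : ℝ) : ℂ)).re := (Complex.ofReal_re _).symm
      _ = (∑ k', ∑ i, inn (yv i) (u k') * inn (u k') (c i)).re := by rw [hexp]
      _ ≤ ‖∑ k', ∑ i, inn (yv i) (u k') * inn (u k') (c i)‖ := Complex.re_le_norm _
      _ ≤ ∑ k', ‖∑ i, inn (yv i) (u k') * inn (u k') (c i)‖ :=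
          norm_sum_le _ _
      _ ≤ ∑ k', Real.sqrt (mu k') := Finset.sum_le_sum fun k' _ => hperk k'
  have hfid : fid ρ σ' = (∑ k', Real.sqrt (mu k')) ^ 2 := by
    rw [fid, ← hNd, htr, Complex.ofReal_re]
  have hSfid : S ≤ fid ρ σ' := by
    rw [hfid]
    calc S = (Real.sqrt S) ^ 2 := (Real.sq_sqrt hS0).symm
      _ ≤ (∑ k', Real.sqrt (mu k')) ^ 2 := pow_le_pow_left₀ (Real.sqrt_nonneg _) hmajor 2
  exact le_trans hSfid (le_csSup hFbdd ⟨σ', hsep, rfl⟩)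

end LemmaB

/-- the fidelity of separability equals the optimal average fidelity of
separability over all pure-state decompositions of `ρ`; equivalently, the optimal
average of `Λ_max(ψ_i)²`. -/
theorem fsep_eq_sup_decompositions (n : ℕ) (hn : 1 ≤ n) (d : Fin n → ℕ)
    (ρ : Matrix (∀ j, Fin (d j)) (∀ j, Fin (d j)) ℂ) (hρ : IsDensity ρ) :
    Fsep ρ = sSup {x | ∃ (k : ℕ) (p : Fin k → ℝ) (ψs : Fin k → (∀ j, Fin (d j)) → ℂ),
        (∀ i, 0 ≤ p i) ∧ ∑ i, p i = 1 ∧ (∀ i, IsUnitVec (ψs i)) ∧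
        ρ = ∑ i, (p i : ℂ) • proj (ψs i) ∧
        x = ∑ i, p i * Fsep (proj (ψs i))} ∧
    Fsep ρ = sSup {x | ∃ (k : ℕ) (p : Fin k → ℝ) (ψs : Fin k → (∀ j, Fin (d j)) → ℂ),
        (∀ i, 0 ≤ p i) ∧ ∑ i, p i = 1 ∧ (∀ i, IsUnitVec (ψs i)) ∧
        ρ = ∑ i, (p i : ℂ) • proj (ψs i) ∧
        x = ∑ i, p i * (Lmax (ψs i)) ^ 2} := by
  classical
  have hne : Nonempty (∀ j, Fin (d j)) := by
    by_contra h
    rw [not_nonempty_iff] at h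
    have h0 : ρ.trace = 0 := by
      rw [Matrix.trace]
      rw [Finset.univ_eq_empty, Finset.sum_empty]
    rw [hρ.2] at h0
    exact one_ne_zero h0
  obtain ⟨φ₀, hp₀, hu₀⟩ := exists_prod_unit hne
  have hprod : ∃ φ : (∀ j, Fin (d j)) → ℂ, IsProdVec φ ∧ IsUnitVec φ := ⟨φ₀, hp₀, hu₀⟩
  have hD2bdd : BddAbove (D2 ρ) := ⟨1, fun x hx => D2_le_one hprod x hx⟩
  obtain ⟨v, lam, hlam0, horthv, hcompv, hρspec, _⟩ := spectral_psd hρ.1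
  have hvunit : ∀ k, IsUnitVec (v k) := fun k => by have := horthv k k; simpa [IsUnitVec] using this
  have hlamsum : ∑ k, lam k = 1 := by
    have h1 : ρ.trace = ((∑ k, lam k : ℝ) : ℂ) := by
      rw [hρspec]
      exact trace_sum_smul_proj v lam hvunit
    rw [hρ.2] at h1
    exact_mod_cast h1.symm
  have hD2ne : (D2 ρ).Nonempty := ⟨_, mem_D2 ρ lam v hlam0 hlamsum hvunit hρspec⟩
  have hFne : {x | ∃ σ, IsSepState σ ∧ x = fid ρ σ}.Nonempty :=
    ⟨_, ⟨proj φ₀, sep_of_prod_unit hp₀ hu₀, rfl⟩⟩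
  have hFleD : ∀ x ∈ {x | ∃ σ, IsSepState σ ∧ x = fid ρ σ}, x ≤ sSup (D2 ρ) := by
    rintro x ⟨σ, hσ, rfl⟩
    obtain ⟨y, hy, hxy⟩ := fid_le_D2 hρ hσ hne
    exact le_trans hxy (le_csSup hD2bdd hy)
  have hFbdd : BddAbove {x | ∃ σ, IsSepState σ ∧ x = fid ρ σ} :=
    ⟨sSup (D2 ρ), fun x hx => hFleD x hx⟩
  have heq2 : Fsep ρ = sSup (D2 ρ) :=
    le_antisymm (csSup_le hFne hFleD) (csSup_le hD2ne (D2_le_fsep hρ hne hFbdd))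
  constructor
  · rw [decomp_sets_eq hprod ρ]
    exact heq2
  · exact heq2
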